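/- Every separable density matrix on ℂ^M ⊗ ℂ^N can be written as a convex combination of at most M²N² pure product states: ρ = Σ_{i=1}^{M²N²} p_i (|α_i⟩⟨α_i| ⊗ |β_i⟩⟨β_i|) with p_i ≥ 0, Σ_i p_i = 1, unit vectors α_i ∈ ℂ^M and β_i ∈ ℂ^N. -/

import Mathlib

open Matrix
open scoped Kronecker ComplexOrder

noncomputable section

/-- A density matrix: positive semidefinite with trace 1. -/
def IsDensityMatrix {n : Type*} [Fintype n] (ρ : Matrix n n ℂ) : Prop :=
  ρ.PosSemidef ∧ ρ.trace = 1

/-- Separability: finite convex combination of Kronecker products of density matrices. -/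
def IsSeparableState {M N : ℕ} (ρ : Matrix (Fin M × Fin N) (Fin M × Fin N) ℂ) : Prop :=
  ∃ (k : ℕ) (p : Fin k → ℝ)
    (σ : Fin k → Matrix (Fin M) (Fin M) ℂ)
    (τ : Fin k → Matrix (Fin N) (Fin N) ℂ),
    (∀ i, 0 ≤ p i) ∧ (∑ i, p i = 1) ∧
    (∀ i, IsDensityMatrix (σ i)) ∧ (∀ i, IsDensityMatrix (τ i)) ∧
    ρ = ∑ i, (p i : ℂ) • (σ i ⊗ₖ τ i)

/-- The pure state |v⟩⟨v| associated with a vector v, i.e. the rank-one matrix v vᴴ. -/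
def pureState {n : Type*} (v : n → ℂ) : Matrix n n ℂ :=
  vecMulVec v (star v)

namespace CaratheodoryAux

variable {m : Type*} [Fintype m] [DecidableEq m]

lemma pureState_isHermitian (v : m → ℂ) : (pureState v).IsHermitian := by
  apply Matrix.IsHermitian.ext
  intro i j
  simp [pureState, vecMulVec_apply, mul_comm]

lemma trace_pureState (v : m → ℂ) (hv : ∑ x, ‖v x‖ ^ 2 = 1) : (pureState v).trace = 1 := by
  have h : (pureState v).trace = ((∑ x, ‖v x‖ ^ 2 : ℝ) : ℂ) := by
    simp only [Matrix.trace, Matrix.diag, pureState, vecMulVec_apply, Pi.star_apply,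
      Complex.ofReal_sum]
    refine Finset.sum_congr rfl fun x _ => ?_
    rw [Complex.star_def, Complex.mul_conj, Complex.normSq_eq_norm_sq]
  rw [h, hv, Complex.ofReal_one]

lemma smul_real_complex_matrix {ι : Type*} (r : ℝ) (X : Matrix ι ι ℂ) :
    r • X = (r : ℂ) • X := by
  ext i j
  simp [Complex.real_smul]

lemma exists_pure_decomposition {σ : Matrix m m ℂ} (h : IsDensityMatrix σ) :
    ∃ (w : m → ℝ) (u : m → m → ℂ), (∀ i, 0 ≤ w i) ∧ (∑ i, w i = 1) ∧
      (∀ i, ∑ x, ‖u i x‖ ^ 2 = 1) ∧ σ = ∑ i, (w i : ℂ) • pureState (u i) := by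
  obtain ⟨hpsd, htr⟩ := h
  have hH : σ.IsHermitian := hpsd.isHermitian
  set U : Matrix m m ℂ := (hH.eigenvectorUnitary : Matrix m m ℂ) with hU
  have hsu : star U * U = 1 := by
    exact (Matrix.mem_unitaryGroup_iff').mp (hH.eigenvectorUnitary).2
  clear_value U
  have hunit : ∀ i, ∑ x, ‖U x i‖ ^ 2 = 1 := by
    intro i
    have h1 : (star U * U) i i = 1 := by rw [hsu, Matrix.one_apply_eq]
    rw [Matrix.mul_apply] at h1
    have h2 : ((∑ x, ‖U x i‖ ^ 2 : ℝ) : ℂ) = 1 := by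
      rw [Complex.ofReal_sum, ← h1]
      refine Finset.sum_congr rfl fun x _ => ?_
      rw [Matrix.star_apply, Complex.star_def, Complex.conj_mul']
      push_cast
      ring
    exact_mod_cast h2
  have hdec : σ = ∑ i, (hH.eigenvalues i : ℂ) • pureState (fun x => U x i) := by
    conv_lhs => rw [hH.spectral_theorem]
    ext i j
    rw [Unitary.conjStarAlgAut_apply, Matrix.mul_apply]
    simp only [Matrix.sum_apply, Matrix.smul_apply, pureState, vecMulVec_apply, Pi.star_apply,
      Matrix.mul_diagonal, Matrix.star_apply, Function.comp_apply, smul_eq_mul]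
    simp only [← hU]
    exact Finset.sum_congr rfl fun k _ => by rw [mul_right_comm]; exact mul_comm _ _
  refine ⟨hH.eigenvalues, fun i x => U x i, fun i => hpsd.eigenvalues_nonneg i, ?_, hunit, hdec⟩
  have h3 : ((∑ i, hH.eigenvalues i : ℝ) : ℂ) = 1 := by
    rw [← htr]
    conv_rhs => rw [hdec]
    rw [Matrix.trace_sum, Complex.ofReal_sum]
    refine Finset.sum_congr rfl fun i _ => ?_
    rw [Matrix.trace_smul, trace_pureState _ (hunit i)]
    simp
  exact_mod_cast h3

end CaratheodoryAux

section Helpers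

open ComplexStarModule Module

variable {ι : Type*} [Fintype ι] [DecidableEq ι]

lemma isHermitian_kron {m n' : Type*} {P : Matrix m m ℂ} {Q : Matrix n' n' ℂ}
    (hP : P.IsHermitian) (hQ : Q.IsHermitian) : (P ⊗ₖ Q).IsHermitian := by
  apply Matrix.IsHermitian.ext
  rintro ⟨i1, i2⟩ ⟨j1, j2⟩
  show star (P j1 i1 * Q j2 i2) = P i1 j1 * Q i2 j2
  rw [star_mul', hP.apply, hQ.apply]

lemma kron_sum_smul {a b m n' : Type*} [Fintype a] [Fintype b]
    (c : a → ℝ) (d : b → ℝ) (P : a → Matrix m m ℂ) (Q : b → Matrix n' n' ℂ) :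
    (∑ j, (c j : ℂ) • P j) ⊗ₖ (∑ l, (d l : ℂ) • Q l)
      = ∑ j, ∑ l, ((c j * d l : ℝ) : ℂ) • (P j ⊗ₖ Q l) := by
  ext ⟨i1, i2⟩ ⟨j1, j2⟩
  show (∑ j, (c j : ℂ) • P j) i1 j1 * (∑ l, (d l : ℂ) • Q l) i2 j2 = _
  rw [Matrix.sum_apply, Matrix.sum_apply, Finset.sum_mul_sum]
  rw [Matrix.sum_apply]
  refine Finset.sum_congr rfl fun j _ => ?_
  rw [Matrix.sum_apply]
  refine Finset.sum_congr rfl fun l _ => ?_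
  show (c j : ℂ) • P j i1 j1 * ((d l : ℂ) • Q l i2 j2) = ((c j * d l : ℝ) : ℂ) • (P j i1 j1 * Q l i2 j2)
  push_cast
  simp only [smul_eq_mul]
  ring

/-- `Matrix ι ι ℂ` is `ℝ`-linearly equivalent to two copies of the self-adjoint part. -/
def selfAdjointProd : Matrix ι ι ℂ ≃ₗ[ℝ] selfAdjoint (Matrix ι ι ℂ) × selfAdjoint (Matrix ι ι ℂ) :=
  LinearEquiv.ofBijective ((realPart (A := Matrix ι ι ℂ)).prod imaginaryPart)
    ⟨fun x y hxy => by
      have hx : ℜ x = ℜ y := congrArg Prod.fst hxy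
      have hy : ℑ x = ℑ y := congrArg Prod.snd hxy
      calc x = (ℜ x : Matrix ι ι ℂ) + Complex.I • (ℑ x : Matrix ι ι ℂ) :=
            (realPart_add_I_smul_imaginaryPart x).symm
        _ = (ℜ y : Matrix ι ι ℂ) + Complex.I • (ℑ y : Matrix ι ι ℂ) := by rw [hx, hy]
        _ = y := realPart_add_I_smul_imaginaryPart y,
    fun z => by
      refine ⟨(z.1 : Matrix ι ι ℂ) + Complex.I • (z.2 : Matrix ι ι ℂ), Prod.ext ?_ ?_⟩
      · show ℜ ((z.1 : Matrix ι ι ℂ) + Complex.I • (z.2 : Matrix ι ι ℂ)) = z.1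
        rw [map_add, realPart_I_smul, z.2.2.imaginaryPart, neg_zero, add_zero]
        exact Subtype.ext z.1.2.coe_realPart
      · show ℑ ((z.1 : Matrix ι ι ℂ) + Complex.I • (z.2 : Matrix ι ι ℂ)) = z.2
        rw [map_add, imaginaryPart_I_smul, z.1.2.imaginaryPart, zero_add]
        exact Subtype.ext z.2.2.coe_realPart⟩

instance : Module.Finite ℝ (selfAdjoint (Matrix ι ι ℂ)) :=
  Module.Finite.of_surjective (realPart (A := Matrix ι ι ℂ)) realPart_surjective

lemma finrank_selfAdjoint_matrix :
    finrank ℝ (selfAdjoint (Matrix ι ι ℂ)) = Fintype.card ι * Fintype.card ι := by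
  have h := (selfAdjointProd (ι := ι)).finrank_eq
  rw [finrank_prod, finrank_matrix, Complex.finrank_real_complex] at h
  omega

/-- The real trace functional on self-adjoint matrices. -/
def reTraceLin : selfAdjoint (Matrix ι ι ℂ) →ₗ[ℝ] ℝ where
  toFun x := (Matrix.trace (x : Matrix ι ι ℂ)).re
  map_add' x y := by
    simp [Matrix.trace_add]
  map_smul' r x := by
    simp [selfAdjoint.val_smul, Matrix.trace_smul]

lemma finrank_ker_reTraceLin [Nonempty ι] :
    finrank ℝ (LinearMap.ker (reTraceLin (ι := ι))) = Fintype.card ι * Fintype.card ι - 1 := by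
  have h1 : (1 : Matrix ι ι ℂ) ∈ selfAdjoint (Matrix ι ι ℂ) := by
    rw [selfAdjoint.mem_iff]; exact star_one _
  have hcard : (0 : ℝ) < Fintype.card ι := by positivity
  have hsurj : Function.Surjective (reTraceLin (ι := ι)) := by
    intro r
    refine ⟨(r / Fintype.card ι) • ⟨1, h1⟩, ?_⟩
    show ((((r / Fintype.card ι) • (⟨1, h1⟩ : selfAdjoint (Matrix ι ι ℂ))) :
      selfAdjoint (Matrix ι ι ℂ)) : Matrix ι ι ℂ).trace.re = r
    rw [selfAdjoint.val_smul, Matrix.trace_smul]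
    simp only [Matrix.trace_one]
    rw [Complex.real_smul]
    push_cast
    simp only [← Complex.ofReal_natCast, ← Complex.ofReal_mul, Complex.ofReal_re]
    field_simp
    exact Complex.ofReal_re r
  have hrange : LinearMap.range (reTraceLin (ι := ι)) = ⊤ := LinearMap.range_eq_top.mpr hsurj
  have h := LinearMap.finrank_range_add_finrank_ker (reTraceLin (ι := ι))
  rw [hrange, finrank_top, finrank_self, finrank_selfAdjoint_matrix] at h
  omega

lemma sum_dite_lt {β : Type*} [AddCommMonoid β] {c K : ℕ} (hc : c ≤ K) (F : Fin c → β) :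
    (∑ i : Fin K, if h : (i : ℕ) < c then F ⟨i, h⟩ else 0) = ∑ j : Fin c, F j := by
  have e1 : (∑ i : Fin K, if h : (i : ℕ) < c then F ⟨i, h⟩ else 0)
      = ∑ i ∈ Finset.range K, (if h : i < c then F ⟨i, h⟩ else 0) :=
    Fin.sum_univ_eq_sum_range (fun i => if h : i < c then F ⟨i, h⟩ else 0) K
  have e2 : (∑ j : Fin c, F j)
      = ∑ i ∈ Finset.range c, (if h : i < c then F ⟨i, h⟩ else 0) := by
    rw [← Fin.sum_univ_eq_sum_range (fun i => if h : i < c then F ⟨i, h⟩ else 0) c]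
    exact Finset.sum_congr rfl fun j _ => by rw [dif_pos j.2]
  rw [e1, e2]
  exact (Finset.sum_subset (Finset.range_subset_range.mpr hc) (fun x _ hx => by
    rw [dif_neg (by simpa using hx)])).symm

end Helpers

lemma sum_norm_single {m : Type*} [Fintype m] [DecidableEq m] (z : m) :
    ∑ x, ‖(Pi.single z 1 : m → ℂ) x‖ ^ 2 = 1 := by
  simp [Pi.single_apply, apply_ite (fun z : ℂ => ‖z‖), apply_ite (fun t : ℝ => t ^ 2)]

open CaratheodoryAux

/-- every separable density matrix on ℂ^M ⊗ ℂ^N is a convex combination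
of at most M²N² pure product states (Carathéodory bound). -/
theorem separable_caratheodory_bound {M N : ℕ}
    (ρ : Matrix (Fin M × Fin N) (Fin M × Fin N) ℂ)
    (hρ : IsDensityMatrix ρ) (hsep : IsSeparableState ρ) :
    ∃ (p : Fin (M ^ 2 * N ^ 2) → ℝ)
      (α : Fin (M ^ 2 * N ^ 2) → (Fin M → ℂ))
      (β : Fin (M ^ 2 * N ^ 2) → (Fin N → ℂ)),
      (∀ i, 0 ≤ p i) ∧ (∑ i, p i = 1) ∧
      (∀ i, ∑ x, ‖α i x‖ ^ 2 = 1) ∧ (∀ i, ∑ y, ‖β i y‖ ^ 2 = 1) ∧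
      ρ = ∑ i, (p i : ℂ) • (pureState (α i) ⊗ₖ pureState (β i)) := by
  classical
  obtain ⟨hpsd, htr⟩ := hρ
  obtain ⟨k, p, σ, τ, hp0, hp1, hσ, hτ, hrep⟩ := hsep
  -- the index type is nonempty
  have hne : Nonempty (Fin M × Fin N) := by
    by_contra h
    rw [not_nonempty_iff] at h
    rw [show ρ.trace = 0 from by simp [Matrix.trace]] at htr
    exact zero_ne_one htr
  have hM : 0 < M := Fin.pos (Classical.choice hne).1
  have hN : 0 < N := Fin.pos (Classical.choice hne).2
  -- decompose each factor into pure states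
  choose w u hw0 hw1 hwu hσdec using fun i => exists_pure_decomposition (hσ i)
  choose v t hv0 hv1 hvt hτdec using fun i => exists_pure_decomposition (hτ i)
  set V := selfAdjoint (Matrix (Fin M × Fin N) (Fin M × Fin N) ℂ) with hV
  let S : Set V := {x | ∃ (a : Fin M → ℂ) (b : Fin N → ℂ),
    (∑ z, ‖a z‖ ^ 2 = 1) ∧ (∑ z, ‖b z‖ ^ 2 = 1) ∧
    (x : Matrix (Fin M × Fin N) (Fin M × Fin N) ℂ) = pureState a ⊗ₖ pureState b}
  have hherm : ∀ (a : Fin M → ℂ) (b : Fin N → ℂ),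
      (pureState a ⊗ₖ pureState b) ∈ selfAdjoint (Matrix (Fin M × Fin N) (Fin M × Fin N) ℂ) := by
    intro a b
    rw [selfAdjoint.mem_iff, Matrix.star_eq_conjTranspose]
    exact isHermitian_kron (pureState_isHermitian a) (pureState_isHermitian b)
  have hρmem : ρ ∈ selfAdjoint (Matrix (Fin M × Fin N) (Fin M × Fin N) ℂ) := by
    rw [selfAdjoint.mem_iff, Matrix.star_eq_conjTranspose]
    exact hpsd.isHermitian
  set X : (Fin k × Fin M × Fin N) → V :=
    fun j => ⟨pureState (u j.1 j.2.1) ⊗ₖ pureState (t j.1 j.2.2), hherm _ _⟩ with hX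
  set q : (Fin k × Fin M × Fin N) → ℝ :=
    fun j => p j.1 * (w j.1 j.2.1 * v j.1 j.2.2) with hq
  have hq0 : ∀ j, 0 ≤ q j := fun j =>
    mul_nonneg (hp0 _) (mul_nonneg (hw0 _ _) (hv0 _ _))
  have hq1 : ∑ j, q j = 1 := by
    rw [Fintype.sum_prod_type]
    simp only [hq, Fintype.sum_prod_type, ← Finset.mul_sum, hv1, hw1, mul_one]
    exact hp1
  have hXS : ∀ j, X j ∈ S := fun j => ⟨u j.1 j.2.1, t j.1 j.2.2, hwu _ _, hvt _ _, rfl⟩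
  have hmat : ρ = ∑ j : (Fin k × Fin M × Fin N), (q j : ℂ) •
      ((X j : Matrix (Fin M × Fin N) (Fin M × Fin N) ℂ)) := by
    rw [hrep, Fintype.sum_prod_type]
    refine Fintype.sum_congr _ _ fun i => ?_
    rw [hσdec i, hτdec i, kron_sum_smul, Finset.smul_sum, Fintype.sum_prod_type]
    refine Fintype.sum_congr _ _ fun a => ?_
    rw [Finset.smul_sum]
    refine Fintype.sum_congr _ _ fun b => ?_
    rw [smul_smul]
    norm_cast
  have hVeq : (⟨ρ, hρmem⟩ : V) = ∑ j, q j • X j := by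
    apply Subtype.ext
    rw [AddSubmonoidClass.coe_finset_sum]
    simp only [selfAdjoint.val_smul, smul_real_complex_matrix]
    exact hmat
  have hconv : (⟨ρ, hρmem⟩ : V) ∈ convexHull ℝ S := by
    have h := Finset.centerMass_mem_convexHull (Finset.univ)
      (fun j _ => hq0 j) (by rw [hq1]; norm_num) (fun j _ => hXS j)
    rwa [Finset.centerMass_eq_of_sum_1 _ _ hq1, ← hVeq] at h
  rw [convexHull_eq_union] at hconv
  simp only [Set.mem_iUnion, exists_prop] at hconv
  obtain ⟨T, hTS, hTai, hxT⟩ := hconv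
  rw [Finset.convexHull_eq, Set.mem_setOf_eq] at hxT
  obtain ⟨W, hW0, hW1, hWc⟩ := hxT
  rw [Finset.centerMass_eq_of_sum_1 _ _ hW1] at hWc
  simp only [id_eq] at hWc
  -- cardinality bound
  have hTne : T.Nonempty := by
    rcases T.eq_empty_or_nonempty with h | h
    · rw [h, Finset.sum_empty] at hW1; exact absurd hW1 (by norm_num)
    · exact h
  obtain ⟨c', hc'⟩ : ∃ c', T.card = c' + 1 :=
    ⟨T.card - 1, (Nat.succ_pred_eq_of_pos (Finset.card_pos.mpr hTne)).symm⟩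
  have hcard : Fintype.card T = c' + 1 := by rw [Fintype.card_coe]; exact hc'
  have hfr := hTai.finrank_vectorSpan hcard
  have htr1 : ∀ y ∈ (T : Set V), reTraceLin y = 1 := by
    intro y hy
    obtain ⟨a, b, ha, hb, hab⟩ := hTS hy
    show ((y : Matrix (Fin M × Fin N) (Fin M × Fin N) ℂ).trace).re = 1
    rw [hab, Matrix.trace_kronecker, trace_pureState a ha, trace_pureState b hb, mul_one,
      Complex.one_re]
  have hsub : vectorSpan ℝ (Set.range (Subtype.val : {y // y ∈ T} → V)) ≤
      LinearMap.ker reTraceLin := by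
    rw [vectorSpan_def, Submodule.span_le]
    rintro z hz
    obtain ⟨x, hx, y, hy, rfl⟩ := Set.mem_vsub.mp hz
    obtain ⟨x', rfl⟩ := hx
    obtain ⟨y', rfl⟩ := hy
    rw [SetLike.mem_coe, LinearMap.mem_ker, vsub_eq_sub, map_sub,
      htr1 _ x'.2, htr1 _ y'.2, sub_self]
  haveI : Nonempty (Fin M × Fin N) := hne
  have hle : c' ≤ M * N * (M * N) - 1 := by
    have h1 : c' ≤ Module.finrank ℝ (LinearMap.ker (reTraceLin
        (ι := Fin M × Fin N))) := by
      rw [← hfr]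
      exact Submodule.finrank_mono hsub
    rwa [finrank_ker_reTraceLin, Fintype.card_prod, Fintype.card_fin, Fintype.card_fin] at h1
  have hpos : 0 < M * N * (M * N) := by positivity
  have hcK : Fintype.card T ≤ M ^ 2 * N ^ 2 := by
    rw [hcard]
    calc c' + 1 ≤ (M * N * (M * N) - 1) + 1 := Nat.add_le_add_right hle 1
      _ = M * N * (M * N) := Nat.succ_pred_eq_of_pos hpos
      _ = M ^ 2 * N ^ 2 := by ring
  -- extraction
  let et : {y // y ∈ T} ≃ Fin (Fintype.card T) := Fintype.equivFin _
  have hmem : ∀ y : {y // y ∈ T}, (y : V) ∈ S := fun y => hTS y.2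
  choose A B hA hB hAB using hmem
  refine ⟨fun i => if h : (i : ℕ) < Fintype.card ↥T then W (et.symm ⟨i, h⟩) else 0,
    fun i => if h : (i : ℕ) < Fintype.card ↥T then A (et.symm ⟨i, h⟩) else Pi.single ⟨0, hM⟩ 1,
    fun i => if h : (i : ℕ) < Fintype.card ↥T then B (et.symm ⟨i, h⟩) else Pi.single ⟨0, hN⟩ 1,
    ?_, ?_, ?_, ?_, ?_⟩
  · intro i
    by_cases h : (i : ℕ) < Fintype.card ↥T
    · simp only [dif_pos h]; exact hW0 _ (et.symm ⟨i, h⟩).2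
    · simp only [dif_neg h]
      exact le_rfl
  · rw [sum_dite_lt hcK (fun j => W (et.symm j)), Equiv.sum_comp et.symm (fun y => W (y : V)),
      Finset.sum_coe_sort T W]
    exact hW1
  · intro i
    by_cases h : (i : ℕ) < Fintype.card ↥T
    · simp only [dif_pos h]; exact hA _
    · simp only [dif_neg h]; exact sum_norm_single _
  · intro i
    by_cases h : (i : ℕ) < Fintype.card ↥T
    · simp only [dif_pos h]; exact hB _
    · simp only [dif_neg h]; exact sum_norm_single _
  · have hcoe : ∑ y ∈ T, (W y : ℂ) • (y : Matrix (Fin M × Fin N) (Fin M × Fin N) ℂ) = ρ := by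
      have h := congrArg (Subtype.val : V → Matrix (Fin M × Fin N) (Fin M × Fin N) ℂ) hWc
      rw [AddSubmonoidClass.coe_finset_sum] at h
      refine Eq.trans ?_ h
      refine Finset.sum_congr rfl fun y _ => ?_
      rw [← smul_real_complex_matrix]
      rfl
    have hstep : ∀ i : Fin (M ^ 2 * N ^ 2),
        ((if h : (i : ℕ) < Fintype.card ↥T then W (et.symm ⟨i, h⟩) else 0 : ℝ) : ℂ) •
          (pureState (if h : (i : ℕ) < Fintype.card ↥T then A (et.symm ⟨i, h⟩)
              else Pi.single ⟨0, hM⟩ 1) ⊗ₖ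
            pureState (if h : (i : ℕ) < Fintype.card ↥T then B (et.symm ⟨i, h⟩)
              else Pi.single ⟨0, hN⟩ 1)) =
        (if h : (i : ℕ) < Fintype.card ↥T then
          (W ((et.symm ⟨i, h⟩ : {y // y ∈ T}) : V) : ℂ) •
            ((et.symm ⟨i, h⟩ : {y // y ∈ T}) : Matrix (Fin M × Fin N) (Fin M × Fin N) ℂ)
          else 0) := by
      intro i
      by_cases h : (i : ℕ) < Fintype.card ↥T
      · simp only [dif_pos h]
        rw [← hAB (et.symm ⟨i, h⟩)]
      · simp only [dif_neg h]
        rw [Complex.ofReal_zero, zero_smul]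
    calc ρ = ∑ y ∈ T, (W y : ℂ) • (y : Matrix (Fin M × Fin N) (Fin M × Fin N) ℂ) := hcoe.symm
      _ = ∑ y : {y // y ∈ T}, (W (y : V) : ℂ) •
            ((y : V) : Matrix (Fin M × Fin N) (Fin M × Fin N) ℂ) :=
          (Finset.sum_coe_sort T
            (fun y => (W y : ℂ) • (y : Matrix (Fin M × Fin N) (Fin M × Fin N) ℂ))).symm
      _ = ∑ j : Fin (Fintype.card ↥T), (W ((et.symm j : {y // y ∈ T}) : V) : ℂ) •
            ((et.symm j : {y // y ∈ T}) : Matrix (Fin M × Fin N) (Fin M × Fin N) ℂ) :=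
          (Equiv.sum_comp et.symm _).symm
      _ = ∑ i : Fin (M ^ 2 * N ^ 2), if h : (i : ℕ) < Fintype.card ↥T then
            (W ((et.symm ⟨i, h⟩ : {y // y ∈ T}) : V) : ℂ) •
            ((et.symm ⟨i, h⟩ : {y // y ∈ T}) : Matrix (Fin M × Fin N) (Fin M × Fin N) ℂ)
          else 0 :=
          (sum_dite_lt hcK _).symm
      _ = _ := Finset.sum_congr rfl fun i _ => (hstep i).symm
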